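/- Let X, Y be compact Hausdorff spaces, Π : Y → X a continuous surjection, G a compact topological group with normalised Haar measure μ, acting continuously on Y such that every fibre Π⁻¹({x}) is precisely a G-orbit. Define P(f)(y) = ∫_G f(s·y) dμ(s) for f ∈ C(Y). Then P is a well-defined continuous unital linear projection on C(Y) with ‖P‖ = 1, whose range is exactly Π*(C(X)), and P ∘ Π* = Π*. -/

import Mathlib

open MeasureTheory
open scoped NNReal ENNReal

theorem haar_averaging_projection {X Y G : Type*}
    [TopologicalSpace X] [CompactSpace X] [T2Space X]
    [TopologicalSpace Y] [CompactSpace Y] [T2Space Y] [Nonempty Y]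
    [Group G] [TopologicalSpace G] [IsTopologicalGroup G] [CompactSpace G] [T2Space G]
    [MeasurableSpace G] [BorelSpace G]
    (μ : Measure G) [μ.IsHaarMeasure] [IsProbabilityMeasure μ]
    [MulAction G Y] [ContinuousSMul G Y]
    (proj : C(Y, X)) (hsurj : Function.Surjective proj)
    (horbit : ∀ y : Y, MulAction.orbit G y = proj ⁻¹' {proj y}) :
    ∃ P : C(Y, ℂ) →L[ℂ] C(Y, ℂ),
      (∀ (f : C(Y, ℂ)) (y : Y), P f y = ∫ s, f (s • y) ∂μ) ∧
      P 1 = 1 ∧ ‖P‖ = 1 ∧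
      (∀ f : C(Y, ℂ), P (P f) = P f) ∧
      (∀ g : C(X, ℂ), P (g.comp proj) = g.comp proj) ∧
      Set.range P = {f : C(Y, ℂ) | ∃ g : C(X, ℂ), f = g.comp proj} := by
  -- μ is also right invariant
  haveI hRI : μ.IsMulRightInvariant := by
    constructor
    intro g
    have hmeas : Measurable (· * g) := measurable_mul_const g
    haveI hprob : IsProbabilityMeasure (Measure.map (· * g) μ) :=
      Measure.isProbabilityMeasure_map hmeas.aemeasurable
    haveI : (Measure.map (· * g) μ).IsMulLeftInvariant := by
      constructor
      intro h
      rw [Measure.map_map (measurable_const_mul h) hmeas]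
      have hcomp : ((h * ·) ∘ (· * g)) = ((· * g) ∘ (h * ·)) := by
        ext x; simp [mul_assoc]
      rw [hcomp, ← Measure.map_map hmeas (measurable_const_mul h),
        MeasureTheory.map_mul_left_eq_self]
    have heq := Measure.isMulInvariant_eq_smul_of_compactSpace (Measure.map (· * g) μ) μ
    have huniv := congrArg (fun ν : Measure G => ν Set.univ) heq
    simp only [measure_univ, Measure.smul_apply, smul_eq_mul, mul_one] at huniv
    have hc : ((Measure.map (· * g) μ).haarScalarFactor μ : ℝ≥0) = 1 := by
      have := huniv.symm
      simpa [ENNReal.smul_def] using this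
    rw [heq, hc, one_smul]
  -- integrability of integrands
  have hint : ∀ (f : C(Y, ℂ)) (y : Y), Integrable (fun s => f (s • y)) μ := by
    intro f y
    exact (f.continuous.comp (continuous_id.smul continuous_const)).integrable_of_hasCompactSupport
      (HasCompactSupport.of_compactSpace _)
  -- continuity of the averaged function
  have hcont : ∀ f : C(Y, ℂ), Continuous (fun y => ∫ s, f (s • y) ∂μ) := by
    intro f
    let F : C(Y × G, ℂ) := ⟨fun p => f (p.2 • p.1), by fun_prop⟩
    have hI : LipschitzWith 1 (fun g : C(G, ℂ) => ∫ s, g s ∂μ) := by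
      apply LipschitzWith.of_dist_le_mul
      intro g₁ g₂
      rw [NNReal.coe_one, one_mul, dist_eq_norm, dist_eq_norm]
      have : Integrable (fun s => g₁ s) μ :=
        g₁.continuous.integrable_of_hasCompactSupport (HasCompactSupport.of_compactSpace _)
      have h2 : Integrable (fun s => g₂ s) μ :=
        g₂.continuous.integrable_of_hasCompactSupport (HasCompactSupport.of_compactSpace _)
      rw [← integral_sub this h2]
      calc ‖∫ s, (g₁ s - g₂ s) ∂μ‖ ≤ ‖g₁ - g₂‖ * (μ Set.univ).toReal := by
            apply norm_integral_le_of_norm_le_const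
            filter_upwards with s
            exact (ContinuousMap.sub_apply g₁ g₂ s) ▸ ContinuousMap.norm_coe_le_norm (g₁ - g₂) s
        _ = ‖g₁ - g₂‖ := by simp
    have : (fun y => ∫ s, f (s • y) ∂μ)
        = (fun g : C(G, ℂ) => ∫ s, g s ∂μ) ∘ (fun y => F.curry y) := rfl
    rw [this]
    exact hI.continuous.comp F.curry.continuous
  -- the linear map
  let P₀ : C(Y, ℂ) →ₗ[ℂ] C(Y, ℂ) :=
    { toFun := fun f => ⟨fun y => ∫ s, f (s • y) ∂μ, hcont f⟩
      map_add' := by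
        intro f g; ext y
        exact integral_add (hint f y) (hint g y)
      map_smul' := by
        intro c f; ext y
        exact integral_smul c _ }
  have hbound : ∀ f : C(Y, ℂ), ‖P₀ f‖ ≤ 1 * ‖f‖ := by
    intro f
    rw [one_mul]
    apply ContinuousMap.norm_le _ (norm_nonneg f) |>.mpr
    intro y
    calc ‖∫ s, f (s • y) ∂μ‖ ≤ ‖f‖ * (μ Set.univ).toReal := by
          apply norm_integral_le_of_norm_le_const
          filter_upwards with s
          exact ContinuousMap.norm_coe_le_norm f _
      _ = ‖f‖ := by simp
  let P : C(Y, ℂ) →L[ℂ] C(Y, ℂ) := P₀.mkContinuous 1 hbound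
  have hP : ∀ (f : C(Y, ℂ)) (y : Y), P f y = ∫ s, f (s • y) ∂μ := fun f y => rfl
  -- P 1 = 1
  have hone : P 1 = 1 := by
    ext y
    rw [hP]
    simp
  -- fiber constancy
  have horbconst : ∀ (f : C(Y, ℂ)) (t : G) (y : Y), P f (t • y) = P f y := by
    intro f t y
    rw [hP, hP]
    have : (fun s => f (s • t • y)) = fun s => (fun u => f (u • y)) (s * t) := by
      ext s; rw [smul_smul]
    rw [this, integral_mul_right_eq_self (fun u => f (u • y)) t]
  have hfiber : ∀ (f : C(Y, ℂ)) (y y' : Y), proj y = proj y' → P f y = P f y' := by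
    intro f y y' h
    have : y' ∈ MulAction.orbit G y := by
      rw [horbit y]; simp [h]
    obtain ⟨t, ht⟩ := this
    rw [← ht]
    exact (horbconst f t y).symm
  -- projection onto functions factoring through proj
  have hfix : ∀ g : C(X, ℂ), P (g.comp proj) = g.comp proj := by
    intro g
    ext y
    rw [hP]
    have : ∀ s : G, proj (s • y) = proj y := by
      intro s
      have : s • y ∈ MulAction.orbit G y := ⟨s, rfl⟩
      rw [horbit y] at this
      exact this
    have heq : (fun s : G => (g.comp proj) (s • y)) = fun _ => g (proj y) := by
      ext s; simp [this s]
    rw [heq]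
    simp
  have hidem : ∀ f : C(Y, ℂ), P (P f) = P f := by
    intro f
    ext y
    rw [hP]
    have heq : (fun s : G => (P f) (s • y)) = fun _ => P f y := by
      ext s; exact horbconst f s y
    rw [heq]
    simp
  -- norm
  have hnorm : ‖P‖ = 1 := by
    apply le_antisymm (P₀.mkContinuous_norm_le zero_le_one hbound)
    have h := P.le_opNorm 1
    rw [hone, norm_one, mul_one] at h
    exact h
  refine ⟨P, hP, hone, hnorm, hidem, hfix, ?_⟩
  -- range characterization
  have hq : Topology.IsQuotientMap proj := proj.continuous.isClosedMap.isQuotientMap proj.continuous hsurj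
  apply Set.eq_of_subset_of_subset
  · rintro _ ⟨f, rfl⟩
    set g₀ : X → ℂ := fun x => P f (Function.surjInv hsurj x) with hg₀
    have hfac : ∀ y, P f y = g₀ (proj y) := by
      intro y
      apply hfiber
      rw [Function.surjInv_eq hsurj (proj y)]
    have hg₀c : Continuous g₀ := by
      rw [hq.continuous_iff]
      have : (g₀ ∘ proj) = fun y => P f y := by ext y; exact (hfac y).symm
      rw [this]
      exact (P f).continuous
    exact ⟨⟨g₀, hg₀c⟩, ContinuousMap.ext fun y => hfac y⟩
  · rintro f ⟨g, rfl⟩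
    exact ⟨g.comp proj, hfix g⟩
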